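/- (Proposition 4 / prop_conv3) Let Γ ⊆ Ω be nonempty and let x ∈ Ω be a solution whose Γ-relaxed robustness cost is strictly smaller than its robustness cost, i.e., R_x^Γ < R_x. Then every solution y ∈ Ω that minimizes the cost c^{s(x)} y over Ω (i.e., every optimal solution for the induced scenario s(x)) does not belong to Γ; hence solving the separation subproblem produces a new solution y ∈ Ω \ Γ. -/
import Mathlib


open Finset

noncomputable section

/-- The cost of a 0-1 vector `x` in a scenario `s`: `∑ i, s i * x i`. -/
def cost {n : ℕ} (s x : Fin n → ℝ) : ℝ := ∑ i, s i * x i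

/-- `x` is a binary (0-1) vector. -/
def IsBinary {n : ℕ} (x : Fin n → ℝ) : Prop := ∀ i, x i = 0 ∨ x i = 1

/-- The set of scenarios determined by the interval costs `[l i, u i]`. -/
def Scen {n : ℕ} (l u : Fin n → ℝ) : Set (Fin n → ℝ) :=
  {s | ∀ i, l i ≤ s i ∧ s i ≤ u i}

/-- The scenario `s(x)` induced by `x`: `u i` if `x i = 1`, `l i` otherwise. -/
def inducedScen {n : ℕ} (l u x : Fin n → ℝ) : Fin n → ℝ :=
  fun i => if x i = 1 then u i else l i

/-- The regret of `x` in scenario `s`: `c^s x - min_{y ∈ Ω} c^s y`. -/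
def regret {n : ℕ} (Ω : Finset (Fin n → ℝ)) (hΩ : Ω.Nonempty) (s x : Fin n → ℝ) : ℝ :=
  cost s x - Ω.inf' hΩ fun y => cost s y

/-- The robustness cost of `x`: the supremum of its regret over all scenarios. -/
def robCost {n : ℕ} (l u : Fin n → ℝ) (Ω : Finset (Fin n → ℝ)) (hΩ : Ω.Nonempty)
    (x : Fin n → ℝ) : ℝ :=
  sSup ((fun s => regret Ω hΩ s x) '' Scen l u)

/-- The `Γ`-relaxed robustness cost of `x`:
`c^{s(x)} x - min_{y ∈ Γ} c^{s(x)} y`. -/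
def relRobCost {n : ℕ} (l u : Fin n → ℝ) (Γ : Finset (Fin n → ℝ)) (hΓ : Γ.Nonempty)
    (x : Fin n → ℝ) : ℝ :=
  cost (inducedScen l u x) x - Γ.inf' hΓ fun y => cost (inducedScen l u x) y

lemma cost_diff_le {n : ℕ} {l u x y s : Fin n → ℝ} (hx : IsBinary x) (hy : IsBinary y)
    (hs : s ∈ Scen l u) :
    cost s x - cost s y ≤ cost (inducedScen l u x) x - cost (inducedScen l u x) y := by
  unfold cost
  rw [← Finset.sum_sub_distrib, ← Finset.sum_sub_distrib]
  apply Finset.sum_le_sum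
  intro i _
  obtain ⟨h1, h2⟩ := hs i
  unfold inducedScen
  rcases hx i with hxi | hxi <;> rcases hy i with hyi | hyi <;>
    simp [hxi, hyi] <;> nlinarith

/-- Proposition 4 / prop_conv3: if `R_x^Γ < R_x`, then every
minimizer `y ∈ Ω` of `c^{s(x)} y` over `Ω` lies outside `Γ`; hence the separation
subproblem produces a new solution `y ∈ Ω \ Γ`. -/
theorem separation_gives_new_cut
    {n : ℕ} (hn : 0 < n) (l u : Fin n → ℝ)
    (hl : ∀ i, 0 ≤ l i) (hlu : ∀ i, l i ≤ u i)
    (Ω : Finset (Fin n → ℝ)) (hΩ : Ω.Nonempty) (hbin : ∀ x ∈ Ω, IsBinary x)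
    (Γ : Finset (Fin n → ℝ)) (hΓ : Γ.Nonempty) (hΓΩ : Γ ⊆ Ω)
    (x : Fin n → ℝ) (hx : x ∈ Ω)
    (hlt : relRobCost l u Γ hΓ x < robCost l u Ω hΩ x) :
    (∀ y ∈ Ω, (∀ z ∈ Ω, cost (inducedScen l u x) y ≤ cost (inducedScen l u x) z) →
      y ∉ Γ) ∧
    (∃ y ∈ Ω, y ∉ Γ ∧
      ∀ z ∈ Ω, cost (inducedScen l u x) y ≤ cost (inducedScen l u x) z) := by
  set sx := inducedScen l u x with hsx
  -- robCost ≤ regret at induced scenario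
  have hrob : robCost l u Ω hΩ x ≤ cost sx x - Ω.inf' hΩ (fun y => cost sx y) := by
    apply csSup_le
    · exact ⟨regret Ω hΩ sx x, ⟨sx, fun i => by
        unfold sx; unfold inducedScen; split <;> exact ⟨by simp [hlu i], by simp [hlu i]⟩, rfl⟩⟩
    · rintro r ⟨s, hs, rfl⟩
      unfold regret
      show cost s x - Ω.inf' hΩ (fun z => cost s z) ≤ cost sx x - Ω.inf' hΩ fun z => cost sx z
      obtain ⟨y, hyΩ, hymin⟩ := Ω.exists_min_image (fun y => cost s y) hΩ
      have h1 : Ω.inf' hΩ (fun z => cost s z) = cost s y :=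
        le_antisymm (Finset.inf'_le _ hyΩ) (Finset.le_inf' _ _ fun z hz => hymin z hz)
      have h2 : Ω.inf' hΩ (fun z => cost sx z) ≤ cost sx y := Finset.inf'_le _ hyΩ
      have h3 := cost_diff_le (hbin x hx) (hbin y hyΩ) hs
      rw [h1]; linarith
  have main : ∀ y ∈ Ω, (∀ z ∈ Ω, cost sx y ≤ cost sx z) → y ∉ Γ := by
    intro y hyΩ hymin hyΓ
    have hinfΩ : Ω.inf' hΩ (fun z => cost sx z) = cost sx y :=
      le_antisymm (Finset.inf'_le _ hyΩ) (Finset.le_inf' _ _ fun z hz => hymin z hz)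
    have hinfΓ : Γ.inf' hΓ (fun z => cost sx z) ≤ cost sx y := Finset.inf'_le _ hyΓ
    have : robCost l u Ω hΩ x ≤ relRobCost l u Γ hΓ x := by
      unfold relRobCost
      change robCost l u Ω hΩ x ≤ cost sx x - Γ.inf' hΓ fun z => cost sx z
      linarith [hrob, hinfΩ, hinfΓ]
    linarith
  refine ⟨main, ?_⟩
  obtain ⟨y, hyΩ, hymin⟩ := Ω.exists_min_image (fun y => cost sx y) hΩ
  exact ⟨y, hyΩ, main y hyΩ hymin, hymin⟩
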